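/- Let H₁, H₂ be separable complex Hilbert spaces, H = H₁ ⊗ H₂, and (X, μ) = (X₁ × X₂, μ₁ ⊗ μ₂) the product of measure spaces with σ-finite positive measures. If F₁ is a continuous frame for H₁ with respect to (X₁, μ₁) with frame bounds A₁, B₁, and F₂ is a continuous frame for H₂ with respect to (X₂, μ₂) with frame bounds A₂, B₂, then F = F₁ ⊗ F₂ is a continuous frame for H with respect to (X, μ) with frame bounds A = A₁A₂ and B = B₁B₂. -/

import Mathlib

open MeasureTheory ENNReal NNReal

noncomputable section

namespace ContFrame

variable {X : Type*} {H : Type*}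

/-- The paper's inner product `⟨f, g⟩`: linear in the first argument and
conjugate-linear in the second (Mathlib's `inner` is conjugate-linear in the first). -/
def pinner [NormedAddCommGroup H] [InnerProductSpace ℂ H] (f g : H) : ℂ :=
  @inner ℂ _ _ g f

/-- `∫_X |⟨f, F x⟩|² dμ(x)`, as a lower integral. -/
def frameInt [MeasurableSpace X] [NormedAddCommGroup H] [InnerProductSpace ℂ H]
    (μ : Measure X) (F : X → H) (f : H) : ℝ≥0∞ :=
  ∫⁻ x, (‖pinner f (F x)‖₊ : ℝ≥0∞) ^ 2 ∂μ

/-- `F` is weakly measurable: `x ↦ ⟨f, F x⟩` is μ-measurable for every `f`. -/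
def WeaklyMeasurable [MeasurableSpace X] [NormedAddCommGroup H] [InnerProductSpace ℂ H]
    (μ : Measure X) (F : X → H) : Prop :=
  ∀ f : H, AEMeasurable (fun x => pinner f (F x)) μ

/-- `F` is a Bessel mapping for `H` w.r.t. `(X, μ)` with Bessel bound `B < ∞`. -/
def IsBesselMapping [MeasurableSpace X] [NormedAddCommGroup H] [InnerProductSpace ℂ H]
    (μ : Measure X) (F : X → H) (B : ℝ≥0∞) : Prop :=
  B < ⊤ ∧ WeaklyMeasurable μ F ∧
    ∀ f : H, frameInt μ F f ≤ B * (‖f‖₊ : ℝ≥0∞) ^ 2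

/-- `F` is a continuous frame for `H` w.r.t. `(X, μ)` with frame bounds `0 < A ≤ B < ∞`:
`A ‖f‖² ≤ ∫_X |⟨f, F x⟩|² dμ(x) ≤ B ‖f‖²` for all `f ∈ H`. -/
def IsContinuousFrame [MeasurableSpace X] [NormedAddCommGroup H] [InnerProductSpace ℂ H]
    (μ : Measure X) (F : X → H) (A B : ℝ≥0∞) : Prop :=
  0 < A ∧ A ≤ B ∧ B < ⊤ ∧ WeaklyMeasurable μ F ∧
    ∀ f : H, A * (‖f‖₊ : ℝ≥0∞) ^ 2 ≤ frameInt μ F f ∧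
      frameInt μ F f ≤ B * (‖f‖₊ : ℝ≥0∞) ^ 2

/-- A realization of the Hilbert tensor product `H = H₁ ⊗ H₂`: a bilinear map
`tmul` whose simple tensors satisfy `⟪a⊗b, c⊗d⟫ = ⟪a,c⟫⟪b,d⟫` and span a dense subspace. -/
structure HilbertTensorProduct (H₁ H₂ H : Type*)
    [NormedAddCommGroup H₁] [InnerProductSpace ℂ H₁]
    [NormedAddCommGroup H₂] [InnerProductSpace ℂ H₂]
    [NormedAddCommGroup H] [InnerProductSpace ℂ H] where
  tmul : H₁ →ₗ[ℂ] H₂ →ₗ[ℂ] H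
  inner_tmul : ∀ (a c : H₁) (b d : H₂),
    (inner ℂ (tmul a b) (tmul c d) : ℂ) = (inner ℂ a c : ℂ) * (inner ℂ b d : ℂ)
  dense_span : Dense (↑(Submodule.span ℂ {z : H | ∃ a b, z = tmul a b}) : Set H)

section Aux

open Metric Submodule Filter Topology

/-- Parseval identity, in `ℝ≥0∞` form. -/
lemma hilbertBasis_tsum_sq {ι E : Type*} [NormedAddCommGroup E] [InnerProductSpace ℂ E]
    [CompleteSpace E] (b : HilbertBasis ι ℂ E) (x : E) :
    ∑' i, (‖(inner ℂ (b i) x : ℂ)‖₊ : ℝ≥0∞) ^ 2 = (‖x‖₊ : ℝ≥0∞) ^ 2 := by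
  have h := b.hasSum_inner_mul_inner x x
  have h1 : ∀ i, (inner ℂ x (b i) : ℂ) * (inner ℂ (b i) x : ℂ)
      = (((‖(inner ℂ (b i) x : ℂ)‖₊ ^ 2 : ℝ≥0) : ℝ) : ℂ) := by
    intro i
    rw [← inner_conj_symm x (b i), RCLike.conj_mul]
    norm_cast
  have h2 : (inner ℂ x x : ℂ) = (((‖x‖₊ ^ 2 : ℝ≥0) : ℝ) : ℂ) := by
    rw [inner_self_eq_norm_sq_to_K]
    norm_cast
  simp only [h1, h2] at h
  have h3 : HasSum (fun i => (‖(inner ℂ (b i) x : ℂ)‖₊ ^ 2 : ℝ≥0)) (‖x‖₊ ^ 2) :=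
    NNReal.hasSum_coe.mp (Complex.hasSum_ofReal.mp h)
  have h4 := ENNReal.tsum_coe_eq h3
  simpa [ENNReal.coe_pow] using h4

/-- A separable Hilbert space has a countable Hilbert basis. -/
lemma exists_countable_hilbertBasis (E : Type*) [NormedAddCommGroup E]
    [InnerProductSpace ℂ E] [CompleteSpace E] [TopologicalSpace.SeparableSpace E] :
    ∃ (w : Set E) (b : HilbertBasis w ℂ E), w.Countable := by
  obtain ⟨w, b, hb⟩ := exists_hilbertBasis ℂ E
  refine ⟨w, b, ?_⟩
  have horto : Orthonormal ℂ ((↑) : w → E) := by rw [← hb]; exact b.orthonormal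
  have hd : Pairwise (Function.onFun Disjoint fun i : w => ball (i : E) (1 / 2)) := by
    intro i j hij
    refine Metric.ball_disjoint_ball ?_
    have hij0 : (inner ℂ (i : E) (j : E) : ℂ) = 0 := horto.2 hij
    have hni : ‖(i : E)‖ = 1 := horto.1 i
    have hnj : ‖(j : E)‖ = 1 := horto.1 j
    have hsq : ‖(i : E) - (j : E)‖ ^ 2 = 2 := by
      rw [@norm_sub_sq ℂ, hij0, hni, hnj]
      norm_num
    have hdist : dist (i : E) (j : E) ^ 2 = 2 := by rw [dist_eq_norm]; exact hsq
    nlinarith [dist_nonneg (x := (i : E)) (y := (j : E))]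
  have : Countable w :=
    hd.countable_of_isOpen_disjoint (fun i => isOpen_ball)
      (fun i => ⟨i, mem_ball_self (by norm_num)⟩)
  exact Set.countable_coe_iff.mp this

namespace HilbertTensorProduct

variable {H₁ H₂ H : Type*}
  [NormedAddCommGroup H₁] [InnerProductSpace ℂ H₁]
  [NormedAddCommGroup H₂] [InnerProductSpace ℂ H₂]
  [NormedAddCommGroup H] [InnerProductSpace ℂ H]
  (tp : HilbertTensorProduct H₁ H₂ H)

lemma norm_tmul (a : H₁) (b : H₂) : ‖tp.tmul a b‖ = ‖a‖ * ‖b‖ := by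
  have h := tp.inner_tmul a a b b
  rw [inner_self_eq_norm_sq_to_K, inner_self_eq_norm_sq_to_K, inner_self_eq_norm_sq_to_K] at h
  have h2 : (‖tp.tmul a b‖ ^ 2 : ℝ) = (‖a‖ * ‖b‖) ^ 2 := by
    have hc : ((‖tp.tmul a b‖ ^ 2 : ℝ) : ℂ) = (((‖a‖ * ‖b‖) ^ 2 : ℝ) : ℂ) := by
      push_cast
      rw [mul_pow]
      exact_mod_cast h
    exact_mod_cast hc
  have := congrArg Real.sqrt h2
  rwa [Real.sqrt_sq (norm_nonneg _), Real.sqrt_sq (by positivity)] at this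

/-- `b ↦ a ⊗ b` as a continuous linear map. -/
def tmulRight (a : H₁) : H₂ →L[ℂ] H :=
  LinearMap.mkContinuous (tp.tmul a) ‖a‖ fun b => le_of_eq (tp.norm_tmul a b)

@[simp] lemma tmulRight_apply (a : H₁) (b : H₂) : tp.tmulRight a b = tp.tmul a b := rfl

/-- `a ↦ a ⊗ b` as a continuous linear map. -/
def tmulLeft (b : H₂) : H₁ →L[ℂ] H :=
  LinearMap.mkContinuous (tp.tmul.flip b) ‖b‖ fun a => by
    simpa [LinearMap.flip_apply, tp.norm_tmul, mul_comm] using le_of_eq (tp.norm_tmul a b)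

@[simp] lemma tmulLeft_apply (a : H₁) (b : H₂) : tp.tmulLeft b a = tp.tmul a b := rfl

/-- Riesz representative of `b ↦ ⟨f, a ⊗ b⟩`. -/
def rRep [CompleteSpace H₂] (f : H) (a : H₁) : H₂ :=
  (InnerProductSpace.toDual ℂ H₂).symm ((innerSL ℂ f).comp (tp.tmulRight a))

lemma pinner_rRep [CompleteSpace H₂] (f : H) (a : H₁) (b : H₂) :
    pinner (tp.rRep f a) b = pinner f (tp.tmul a b) := by
  have h : (inner ℂ (tp.rRep f a) b : ℂ) = (inner ℂ f (tp.tmul a b) : ℂ) :=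
    InnerProductSpace.toDual_symm_apply
  simp only [pinner, ← inner_conj_symm b, ← inner_conj_symm (tp.tmul a b)]
  exact congrArg _ h

/-- Riesz representative of `a ↦ ⟨f, a ⊗ b⟩`. -/
def lRep [CompleteSpace H₁] (f : H) (b : H₂) : H₁ :=
  (InnerProductSpace.toDual ℂ H₁).symm ((innerSL ℂ f).comp (tp.tmulLeft b))

lemma pinner_lRep [CompleteSpace H₁] (f : H) (a : H₁) (b : H₂) :
    pinner (tp.lRep f b) a = pinner f (tp.tmul a b) := by
  have h : (inner ℂ (tp.lRep f b) a : ℂ) = (inner ℂ f (tp.tmul a b) : ℂ) :=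
    InnerProductSpace.toDual_symm_apply
  simp only [pinner, ← inner_conj_symm a, ← inner_conj_symm (tp.tmul a b)]
  exact congrArg _ h

lemma orthonormal_tmul {ι₁ ι₂ : Type*} {u : ι₁ → H₁} {e : ι₂ → H₂}
    (hu : Orthonormal ℂ u) (he : Orthonormal ℂ e) :
    Orthonormal ℂ (fun p : ι₁ × ι₂ => tp.tmul (u p.1) (e p.2)) := by
  classical
  rw [orthonormal_iff_ite] at hu he ⊢
  intro p q
  rw [tp.inner_tmul, hu p.1 q.1, he p.2 q.2]
  by_cases h1 : p.1 = q.1 <;> by_cases h2 : p.2 = q.2 <;>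
    simp [Prod.ext_iff, h1, h2]

lemma dense_span_tmul {ι₁ ι₂ : Type*} (u : HilbertBasis ι₁ ℂ H₁) (e : HilbertBasis ι₂ ℂ H₂) :
    ⊤ ≤ (span ℂ (Set.range fun p : ι₁ × ι₂ => tp.tmul (u p.1) (e p.2))).topologicalClosure := by
  set M := (span ℂ (Set.range fun p : ι₁ × ι₂ => tp.tmul (u p.1) (e p.2))).topologicalClosure
    with hM_def
  have hMc : IsClosed (M : Set H) := Submodule.isClosed_topologicalClosure _
  have h1 : ∀ (i : ι₁) (b : H₂), tp.tmul (u i) b ∈ M := by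
    intro i b
    have hs : HasSum (fun j => (tp.tmulRight (u i)) (e.repr b j • e j)) (tp.tmulRight (u i) b) :=
      (e.hasSum_repr b).mapL _
    refine hMc.mem_of_tendsto hs (Eventually.of_forall fun s => ?_)
    refine Submodule.sum_mem _ fun j _ => ?_
    rw [_root_.map_smul]
    exact Submodule.smul_mem _ _
      (le_topologicalClosure _ (subset_span ⟨(i, j), rfl⟩))
  have h2 : ∀ (a : H₁) (b : H₂), tp.tmul a b ∈ M := by
    intro a b
    have hs : HasSum (fun i => (tp.tmulLeft b) (u.repr a i • u i)) (tp.tmulLeft b a) :=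
      (u.hasSum_repr a).mapL _
    refine hMc.mem_of_tendsto hs (Eventually.of_forall fun s => ?_)
    refine Submodule.sum_mem _ fun i _ => ?_
    rw [_root_.map_smul]
    exact Submodule.smul_mem _ _ (h1 i b)
  have h3 : Submodule.span ℂ {z : H | ∃ a b, z = tp.tmul a b} ≤ M :=
    Submodule.span_le.2 fun z hz => by obtain ⟨a, b, rfl⟩ := hz; exact h2 a b
  calc (⊤ : Submodule ℂ H)
      = (span ℂ {z : H | ∃ a b, z = tp.tmul a b}).topologicalClosure :=
        (Submodule.dense_iff_topologicalClosure_eq_top.mp tp.dense_span).symm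
    _ ≤ M := Submodule.topologicalClosure_minimal _ h3 hMc

end HilbertTensorProduct

end Aux

/-- If `F₁` is a continuous frame for `H₁` with frame bounds `A₁, B₁`
and `F₂` is a continuous frame for `H₂` with frame bounds `A₂, B₂`, then
`F = F₁ ⊗ F₂` is a continuous frame for `H = H₁ ⊗ H₂` w.r.t. the product measure,
with frame bounds `A = A₁A₂` and `B = B₁B₂`. -/
theorem tensor_of_frames_isFrame
    {X₁ X₂ : Type*} [MeasurableSpace X₁] [MeasurableSpace X₂]
    {H₁ H₂ H : Type*}
    [NormedAddCommGroup H₁] [InnerProductSpace ℂ H₁] [CompleteSpace H₁]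
      [TopologicalSpace.SeparableSpace H₁]
    [NormedAddCommGroup H₂] [InnerProductSpace ℂ H₂] [CompleteSpace H₂]
      [TopologicalSpace.SeparableSpace H₂]
    [NormedAddCommGroup H] [InnerProductSpace ℂ H] [CompleteSpace H]
      [TopologicalSpace.SeparableSpace H]
    (μ₁ : Measure X₁) (μ₂ : Measure X₂) [SigmaFinite μ₁] [SigmaFinite μ₂]
    (tp : HilbertTensorProduct H₁ H₂ H)
    (F₁ : X₁ → H₁) (F₂ : X₂ → H₂) (A₁ B₁ A₂ B₂ : ℝ≥0∞)
    (hF₁ : IsContinuousFrame μ₁ F₁ A₁ B₁)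
    (hF₂ : IsContinuousFrame μ₂ F₂ A₂ B₂) :
    IsContinuousFrame (μ₁.prod μ₂)
      (fun x : X₁ × X₂ => tp.tmul (F₁ x.1) (F₂ x.2)) (A₁ * A₂) (B₁ * B₂) := by
  obtain ⟨hA₁pos, hA₁B₁, hB₁top, hF₁m, hF₁b⟩ := hF₁
  obtain ⟨hA₂pos, hA₂B₂, hB₂top, hF₂m, hF₂b⟩ := hF₂
  obtain ⟨w₁, u, hw₁⟩ := exists_countable_hilbertBasis H₁
  obtain ⟨w₂, e, hw₂⟩ := exists_countable_hilbertBasis H₂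
  haveI : Countable w₁ := hw₁.to_subtype
  haveI : Countable w₂ := hw₂.to_subtype
  set v : ↥w₁ × ↥w₂ → H := fun p => tp.tmul (u p.1) (e p.2) with hv_def
  have hv : Orthonormal ℂ v := tp.orthonormal_tmul u.orthonormal e.orthonormal
  have hvsp := tp.dense_span_tmul u e
  let vb : HilbertBasis (↥w₁ × ↥w₂) ℂ H := HilbertBasis.mk hv hvsp
  have hvb : ⇑vb = v := HilbertBasis.coe_mk hv hvsp
  set F : X₁ × X₂ → H := fun x => tp.tmul (F₁ x.1) (F₂ x.2) with hF_def
  have hFm : WeaklyMeasurable (μ₁.prod μ₂) F := by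
    intro f
    have hterm : ∀ p : ↥w₁ × ↥w₂, AEMeasurable
        (fun x : X₁ × X₂ => (inner ℂ (F x) (v p) : ℂ) * (inner ℂ (v p) f : ℂ)) (μ₁.prod μ₂) := by
      intro p
      have h1 : AEMeasurable (fun x : X₁ × X₂ => pinner (u p.1) (F₁ x.1)) (μ₁.prod μ₂) :=
        (hF₁m (u p.1)).comp_quasiMeasurePreserving Measure.quasiMeasurePreserving_fst
      have h2 : AEMeasurable (fun x : X₁ × X₂ => pinner (e p.2) (F₂ x.2)) (μ₁.prod μ₂) :=
        (hF₂m (e p.2)).comp_quasiMeasurePreserving Measure.quasiMeasurePreserving_snd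
      have heq : (fun x : X₁ × X₂ => (inner ℂ (F x) (v p) : ℂ))
          = fun x => pinner (u p.1) (F₁ x.1) * pinner (e p.2) (F₂ x.2) := by
        funext x
        simp only [hF_def, hv_def, tp.inner_tmul, pinner]
      exact (heq ▸ (show AEMeasurable (fun x : X₁ × X₂ => pinner (u p.1) (F₁ x.1) * pinner (e p.2) (F₂ x.2)) (μ₁.prod μ₂) from h1.mul h2)).mul_const _
    have hlim : ∀ x : X₁ × X₂, Filter.Tendsto
        (fun s : Finset (↥w₁ × ↥w₂) => ∑ p ∈ s, (inner ℂ (F x) (v p) : ℂ) * (inner ℂ (v p) f : ℂ))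
        Filter.atTop (nhds (pinner f (F x))) := by
      intro x
      have h := vb.hasSum_inner_mul_inner (F x) f
      rw [hvb] at h
      exact h
    exact aemeasurable_of_tendsto_metrizable_ae Filter.atTop
      (fun s => Finset.aemeasurable_fun_sum s fun p _ => hterm p)
      (Filter.Eventually.of_forall hlim)
  refine ⟨ENNReal.mul_pos hA₁pos.ne' hA₂pos.ne', mul_le_mul' hA₁B₁ hA₂B₂,
    ENNReal.mul_lt_top hB₁top hB₂top, hFm, ?_⟩
  intro f
  set g : X₁ → H₂ := fun x₁ => tp.rRep f (F₁ x₁) with hg_def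
  set φ : ↥w₂ → H₁ := fun j => tp.lRep f (e j) with hφ_def
  have hstep : frameInt (μ₁.prod μ₂) F f = ∫⁻ x₁, frameInt μ₂ F₂ (g x₁) ∂μ₁ := by
    rw [frameInt, MeasureTheory.lintegral_prod (fun x => (‖pinner f (F x)‖₊ : ℝ≥0∞) ^ 2) ((hFm f).enorm.pow_const 2)]
    refine lintegral_congr fun x₁ => ?_
    rw [frameInt]
    refine lintegral_congr fun x₂ => ?_
    have : pinner f (F (x₁, x₂)) = pinner (g x₁) (F₂ x₂) :=
      (tp.pinner_rRep f (F₁ x₁) (F₂ x₂)).symm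
    rw [this]
  have hgnorm : ∀ x₁, (‖g x₁‖₊ : ℝ≥0∞) ^ 2
      = ∑' j : ↥w₂, (‖pinner (φ j) (F₁ x₁)‖₊ : ℝ≥0∞) ^ 2 := by
    intro x₁
    rw [← hilbertBasis_tsum_sq e (g x₁)]
    refine tsum_congr fun j => ?_
    congr 3
    calc (inner ℂ (e j) (g x₁) : ℂ) = pinner (g x₁) (e j) := rfl
      _ = pinner f (tp.tmul (F₁ x₁) (e j)) := tp.pinner_rRep f (F₁ x₁) (e j)
      _ = pinner (φ j) (F₁ x₁) := (tp.pinner_lRep f (F₁ x₁) (e j)).symm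
  have hφsum : ∑' j : ↥w₂, (‖φ j‖₊ : ℝ≥0∞) ^ 2 = (‖f‖₊ : ℝ≥0∞) ^ 2 := by
    have hterm : ∀ j : ↥w₂, (‖φ j‖₊ : ℝ≥0∞) ^ 2
        = ∑' i : ↥w₁, (‖(inner ℂ (v (i, j)) f : ℂ)‖₊ : ℝ≥0∞) ^ 2 := by
      intro j
      rw [← hilbertBasis_tsum_sq u (φ j)]
      refine tsum_congr fun i => ?_
      congr 3
      calc (inner ℂ (u i) (φ j) : ℂ) = pinner (φ j) (u i) := rfl
        _ = pinner f (tp.tmul (u i) (e j)) := tp.pinner_lRep f (u i) (e j)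
        _ = (inner ℂ (v (i, j)) f : ℂ) := rfl
    calc ∑' j : ↥w₂, (‖φ j‖₊ : ℝ≥0∞) ^ 2
        = ∑' (j : ↥w₂) (i : ↥w₁), (‖(inner ℂ (v (i, j)) f : ℂ)‖₊ : ℝ≥0∞) ^ 2 := tsum_congr hterm
      _ = ∑' (i : ↥w₁) (j : ↥w₂), (‖(inner ℂ (v (i, j)) f : ℂ)‖₊ : ℝ≥0∞) ^ 2 := ENNReal.tsum_comm
      _ = ∑' p : ↥w₁ × ↥w₂, (‖(inner ℂ (v p) f : ℂ)‖₊ : ℝ≥0∞) ^ 2 := by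
          rw [← ENNReal.tsum_prod]
      _ = (‖f‖₊ : ℝ≥0∞) ^ 2 := by
          have h := hilbertBasis_tsum_sq vb f
          rw [hvb] at h
          exact h
  have hφmeas : ∀ j : ↥w₂, AEMeasurable (fun x₁ => (‖pinner (φ j) (F₁ x₁)‖₊ : ℝ≥0∞) ^ 2) μ₁ :=
    fun j => (hF₁m (φ j)).enorm.pow_const 2
  have hgint : ∫⁻ x₁, (‖g x₁‖₊ : ℝ≥0∞) ^ 2 ∂μ₁ = ∑' j : ↥w₂, frameInt μ₁ F₁ (φ j) := by
    calc ∫⁻ x₁, (‖g x₁‖₊ : ℝ≥0∞) ^ 2 ∂μ₁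
        = ∫⁻ x₁, ∑' j : ↥w₂, (‖pinner (φ j) (F₁ x₁)‖₊ : ℝ≥0∞) ^ 2 ∂μ₁ :=
          lintegral_congr hgnorm
      _ = ∑' j : ↥w₂, ∫⁻ x₁, (‖pinner (φ j) (F₁ x₁)‖₊ : ℝ≥0∞) ^ 2 ∂μ₁ :=
          lintegral_tsum hφmeas
      _ = ∑' j : ↥w₂, frameInt μ₁ F₁ (φ j) := rfl
  constructor
  · calc A₁ * A₂ * (‖f‖₊ : ℝ≥0∞) ^ 2
        = A₂ * (A₁ * ∑' j : ↥w₂, (‖φ j‖₊ : ℝ≥0∞) ^ 2) := by rw [hφsum]; ring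
      _ = A₂ * ∑' j : ↥w₂, A₁ * (‖φ j‖₊ : ℝ≥0∞) ^ 2 := by rw [ENNReal.tsum_mul_left]
      _ ≤ A₂ * ∑' j : ↥w₂, frameInt μ₁ F₁ (φ j) := by
          gcongr with j
          exact (hF₁b (φ j)).1
      _ = A₂ * ∫⁻ x₁, (‖g x₁‖₊ : ℝ≥0∞) ^ 2 ∂μ₁ := by rw [hgint]
      _ = ∫⁻ x₁, A₂ * (‖g x₁‖₊ : ℝ≥0∞) ^ 2 ∂μ₁ :=
          (lintegral_const_mul' _ _ (hA₂B₂.trans_lt hB₂top).ne).symm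
      _ ≤ ∫⁻ x₁, frameInt μ₂ F₂ (g x₁) ∂μ₁ := lintegral_mono fun x₁ => (hF₂b (g x₁)).1
      _ = frameInt (μ₁.prod μ₂) F f := hstep.symm
  · calc frameInt (μ₁.prod μ₂) F f
        = ∫⁻ x₁, frameInt μ₂ F₂ (g x₁) ∂μ₁ := hstep
      _ ≤ ∫⁻ x₁, B₂ * (‖g x₁‖₊ : ℝ≥0∞) ^ 2 ∂μ₁ := lintegral_mono fun x₁ => (hF₂b (g x₁)).2
      _ = B₂ * ∫⁻ x₁, (‖g x₁‖₊ : ℝ≥0∞) ^ 2 ∂μ₁ := lintegral_const_mul' _ _ hB₂top.ne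
      _ = B₂ * ∑' j : ↥w₂, frameInt μ₁ F₁ (φ j) := by rw [hgint]
      _ ≤ B₂ * ∑' j : ↥w₂, B₁ * (‖φ j‖₊ : ℝ≥0∞) ^ 2 := by
          gcongr with j
          exact (hF₁b (φ j)).2
      _ = B₂ * (B₁ * (‖f‖₊ : ℝ≥0∞) ^ 2) := by rw [ENNReal.tsum_mul_left, hφsum]
      _ = B₁ * B₂ * (‖f‖₊ : ℝ≥0∞) ^ 2 := by ring

end ContFrame
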